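/- arXiv:2507.04198 — 2 statements merged into one kernel-verified Lean document; each statement's English description precedes it below -/
import Mathlib

section
/- Let g(s) := s e^{|ln s|^{1/2}} for s > 0, let Ω₀ := { x ∈ (0,∞)² : 0 < x₁ < e^{−1} and x₂ < g(x₁) }, let Q(r) := (0,∞)² \ closure(B_r(0)), and for s ∈ (0, e^{−4}] let D_s := Ω₀ ∩ Q(√(s² + g(s)²)) ∩ B_{e^{−1}}(0). Then lim_{s→0⁺} (4/(π |ln s|)) ∫_{D_s} (y₁ y₂ / |y|⁴) dy = 2/π. -/
set_option maxHeartbeats 1000000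

open MeasureTheory Real Filter Set Topology

noncomputable section

namespace Aux14

/-- The integrand. -/
def ff (y : ℝ × ℝ) : ℝ := y.1 * y.2 / (y.1 ^ 2 + y.2 ^ 2) ^ 2

lemma tendsto_sqrt_atTop : Tendsto Real.sqrt atTop atTop := by
  rw [tendsto_atTop]
  intro b
  filter_upwards [eventually_ge_atTop ((max b 0) ^ 2)] with x hx
  calc b ≤ max b 0 := le_max_left _ _
    _ = Real.sqrt ((max b 0) ^ 2) := (Real.sqrt_sq (le_max_right _ _)).symm
    _ ≤ Real.sqrt x := Real.sqrt_le_sqrt hx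

lemma mem_image_iff {a b α : ℝ} (ha : 0 ≤ a) (hα2 : α ≤ π / 2) (y : ℝ × ℝ) :
    y ∈ polarCoord.symm '' (Ioo a b ×ˢ Ioo 0 α) ↔
      0 < y.1 ∧ 0 < y.2 ∧ a < Real.sqrt (y.1 ^ 2 + y.2 ^ 2) ∧
        Real.sqrt (y.1 ^ 2 + y.2 ^ 2) < b ∧ Real.arctan (y.2 / y.1) < α := by
  constructor
  · rintro ⟨⟨r, θ⟩, ⟨hr, hθ⟩, rfl⟩
    simp only [mem_Ioo] at hr hθ
    have hr0 : 0 < r := lt_of_le_of_lt ha hr.1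
    have hθ2 : θ < π / 2 := lt_of_lt_of_le hθ.2 hα2
    have hcos : 0 < Real.cos θ := Real.cos_pos_of_mem_Ioo ⟨by linarith [Real.pi_pos], hθ2⟩
    have hsin : 0 < Real.sin θ := Real.sin_pos_of_pos_of_lt_pi hθ.1 (by linarith [Real.pi_pos])
    have hS : (r * Real.cos θ) ^ 2 + (r * Real.sin θ) ^ 2 = r ^ 2 := by
      have := Real.sin_sq_add_cos_sq θ; nlinarith
    have hsqrt : Real.sqrt ((r * Real.cos θ) ^ 2 + (r * Real.sin θ) ^ 2) = r := by
      rw [hS, Real.sqrt_sq hr0.le]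
    refine ⟨by simpa using mul_pos hr0 hcos, by simpa using mul_pos hr0 hsin, ?_, ?_, ?_⟩
    · simpa [hsqrt] using hr.1
    · simpa [hsqrt] using hr.2
    · have : (r * Real.sin θ) / (r * Real.cos θ) = Real.tan θ := by
        rw [mul_div_mul_left _ _ hr0.ne', Real.tan_eq_sin_div_cos]
      simpa [polarCoord_symm_apply, this, Real.arctan_tan (by linarith [Real.pi_pos]) hθ2]
        using hθ.2
  · rintro ⟨h1, h2, h3, h4, h5⟩
    set S := Real.sqrt (y.1 ^ 2 + y.2 ^ 2) with hSdef
    have hS0 : 0 < S := lt_of_le_of_lt ha h3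
    have hx0 : 0 < y.2 / y.1 := div_pos h2 h1
    set θ := Real.arctan (y.2 / y.1) with hθdef
    have hθ0 : 0 < θ := by
      rw [hθdef, ← Real.arctan_zero]
      exact Real.arctan_strictMono hx0
    refine ⟨(S, θ), ⟨⟨h3, h4⟩, ⟨hθ0, h5⟩⟩, ?_⟩
    have hroot : Real.sqrt (1 + (y.2 / y.1) ^ 2) = S / y.1 := by
      rw [show 1 + (y.2 / y.1) ^ 2 = (y.1 ^ 2 + y.2 ^ 2) / y.1 ^ 2 by field_simp,
        Real.sqrt_div (by positivity), Real.sqrt_sq h1.le]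
    have hcos : Real.cos θ = 1 / Real.sqrt (1 + (y.2 / y.1) ^ 2) := Real.cos_arctan _
    have hsin : Real.sin θ = (y.2 / y.1) / Real.sqrt (1 + (y.2 / y.1) ^ 2) := Real.sin_arctan _
    have hy : y = (y.1, y.2) := rfl
    rw [polarCoord_symm_apply]
    rw [hy]
    congr 1
    · rw [hcos, hroot, one_div_div, mul_div_cancel₀ _ hS0.ne']
    · rw [hsin, hroot]
      field_simp

end Aux14

namespace Aux14

lemma setIntegral_polar (f : ℝ × ℝ → ℝ) {P : Set (ℝ × ℝ)} (hP : MeasurableSet P)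
    (hPsub : P ⊆ polarCoord.target) (hIm : MeasurableSet (polarCoord.symm '' P)) :
    ∫ y in polarCoord.symm '' P, f y = ∫ p in P, p.1 * f (polarCoord.symm p) := by
  have h := integral_comp_polarCoord_symm ((polarCoord.symm '' P).indicator f)
  rw [integral_indicator hIm] at h
  rw [← h]
  have hmem : ∀ p ∈ polarCoord.target,
      (polarCoord.symm p ∈ polarCoord.symm '' P ↔ p ∈ P) := by
    intro p hp
    constructor
    · rintro ⟨q, hq, hqe⟩
      have : q = p := polarCoord.symm.injOn (by rw [OpenPartialHomeomorph.symm_source]; exact hPsub hq)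
        (by rwa [OpenPartialHomeomorph.symm_source]) hqe
      rwa [← this]
    · exact fun hpP => mem_image_of_mem _ hpP
  rw [setIntegral_congr_fun polarCoord.open_target.measurableSet
    (g := P.indicator fun q => q.1 * f (polarCoord.symm q)) ?_]
  · rw [setIntegral_indicator hP, inter_eq_self_of_subset_right hPsub]
  · intro p hp
    by_cases hpP : p ∈ P
    · simp only [indicator_of_mem hpP, indicator_of_mem ((hmem p hp).2 hpP), smul_eq_mul]
    · have : polarCoord.symm p ∉ polarCoord.symm '' P := fun hc => hpP ((hmem p hp).1 hc)
      simp only [indicator_of_notMem hpP, indicator_of_notMem this, smul_zero]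

lemma sector_val {a b α : ℝ} (ha : 0 < a) (hab : a < b) (hα : 0 < α) (hα2 : α ≤ π / 2) :
    ∫ y in polarCoord.symm '' (Ioo a b ×ˢ Ioo 0 α), ff y
      = (Real.log b - Real.log a) * (Real.sin α ^ 2 / 2) := by
  have hb : 0 < b := ha.trans hab
  have hmeasP : MeasurableSet (Ioo a b ×ˢ Ioo 0 α) :=
    measurableSet_Ioo.prod measurableSet_Ioo
  have hsub : Ioo a b ×ˢ Ioo 0 α ⊆ polarCoord.target := by
    rintro ⟨r, θ⟩ ⟨hr, hθ⟩
    simp only [mem_Ioo] at hr hθ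
    constructor
    · exact lt_of_le_of_lt ha.le hr.1
    · exact ⟨by dsimp; nlinarith [Real.pi_pos], by dsimp; nlinarith [Real.pi_pos]⟩
  have hIm : MeasurableSet (polarCoord.symm '' (Ioo a b ×ˢ Ioo 0 α)) := by
    have : polarCoord.symm '' (Ioo a b ×ˢ Ioo 0 α) =
        {y : ℝ × ℝ | 0 < y.1 ∧ 0 < y.2 ∧ a < Real.sqrt (y.1 ^ 2 + y.2 ^ 2) ∧
          Real.sqrt (y.1 ^ 2 + y.2 ^ 2) < b ∧ Real.arctan (y.2 / y.1) < α} := by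
      ext y; exact mem_image_iff ha.le hα2 y
    rw [this]
    have hc : Continuous fun y : ℝ × ℝ => Real.sqrt (y.1 ^ 2 + y.2 ^ 2) :=
      ((continuous_fst.pow 2).add (continuous_snd.pow 2)).sqrt
    have hm : Measurable fun y : ℝ × ℝ => Real.arctan (y.2 / y.1) :=
      Real.continuous_arctan.measurable.comp (measurable_snd.div measurable_fst)
    exact ((measurableSet_lt measurable_const measurable_fst).inter
      ((measurableSet_lt measurable_const measurable_snd).inter
      ((measurableSet_lt measurable_const hc.measurable).inter
      ((measurableSet_lt hc.measurable measurable_const).inter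
      (measurableSet_lt hm measurable_const)))))
  rw [setIntegral_polar _ hmeasP hsub hIm]
  rw [setIntegral_congr_fun hmeasP (g := fun p => (1 / p.1) * (Real.sin p.2 * Real.cos p.2)) ?_]
  · rw [Measure.volume_eq_prod,
      setIntegral_prod_mul (L := ℝ) (fun r : ℝ => 1 / r) (fun θ : ℝ => Real.sin θ * Real.cos θ)]
    have h1 : ∫ r in Ioo a b, 1 / r = Real.log b - Real.log a := by
      rw [← integral_Ioc_eq_integral_Ioo, ← intervalIntegral.integral_of_le hab.le,
        integral_one_div (by
          intro hc
          rw [Set.uIcc_of_le hab.le] at hc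
          exact absurd hc.1 (by linarith)),
        Real.log_div hb.ne' ha.ne']
    have h2 : ∫ θ in Ioo 0 α, Real.sin θ * Real.cos θ = Real.sin α ^ 2 / 2 := by
      rw [← integral_Ioc_eq_integral_Ioo, ← intervalIntegral.integral_of_le hα.le]
      have hder : ∀ x ∈ Set.uIcc 0 α, HasDerivAt (fun x => Real.sin x ^ 2 / 2)
          (Real.sin x * Real.cos x) x := by
        intro x _
        have : HasDerivAt (fun x => Real.sin x ^ 2 / 2)
            (((2:ℕ):ℝ) * Real.sin x ^ (2 - 1) * Real.cos x / 2) x :=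
          ((Real.hasDerivAt_sin x).pow 2).div_const 2
        convert this using 1
        ring
      rw [intervalIntegral.integral_eq_sub_of_hasDerivAt hder
        ((continuous_sin.mul continuous_cos).intervalIntegrable _ _)]
      simp
    rw [h1, h2]
  · rintro ⟨r, θ⟩ ⟨hr, hθ⟩
    simp only [mem_Ioo] at hr hθ
    have hr0 : 0 < r := lt_of_le_of_lt ha.le hr.1
    simp only [polarCoord_symm_apply, ff]
    have hS : (r * Real.cos θ) ^ 2 + (r * Real.sin θ) ^ 2 = r ^ 2 := by
      have := Real.sin_sq_add_cos_sq θ; nlinarith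
    rw [hS]
    field_simp

end Aux14

namespace Aux14

def quadAnn (a b : ℝ) : Set (ℝ × ℝ) :=
  {y : ℝ × ℝ | 0 < y.1 ∧ 0 < y.2 ∧ a < Real.sqrt (y.1 ^ 2 + y.2 ^ 2) ∧
    Real.sqrt (y.1 ^ 2 + y.2 ^ 2) < b}

def sect (a b T : ℝ) : Set (ℝ × ℝ) :=
  {y : ℝ × ℝ | 0 < y.1 ∧ 0 < y.2 ∧ y.2 < T * y.1 ∧ a < Real.sqrt (y.1 ^ 2 + y.2 ^ 2) ∧
    Real.sqrt (y.1 ^ 2 + y.2 ^ 2) < b}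

lemma quadAnn_eq {a b : ℝ} (ha : 0 ≤ a) :
    quadAnn a b = polarCoord.symm '' (Ioo a b ×ˢ Ioo 0 (π / 2)) := by
  ext y
  rw [mem_image_iff ha le_rfl]
  simp only [quadAnn, mem_setOf_eq]
  exact ⟨fun ⟨h1, h2, h3, h4⟩ => ⟨h1, h2, h3, h4, Real.arctan_lt_pi_div_two _⟩,
    fun ⟨h1, h2, h3, h4, _⟩ => ⟨h1, h2, h3, h4⟩⟩

lemma sect_eq {a b T : ℝ} (ha : 0 ≤ a) (hT : 0 < T) :
    sect a b T = polarCoord.symm '' (Ioo a b ×ˢ Ioo 0 (Real.arctan T)) := by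
  ext y
  rw [mem_image_iff ha (Real.arctan_lt_pi_div_two T).le]
  simp only [sect, mem_setOf_eq]
  constructor
  · rintro ⟨h1, h2, h3, h4, h5⟩
    exact ⟨h1, h2, h4, h5, Real.arctan_strictMono.lt_iff_lt.2 ((div_lt_iff₀ h1).2 h3)⟩
  · rintro ⟨h1, h2, h3, h4, h5⟩
    exact ⟨h1, h2, (div_lt_iff₀ h1).1 (Real.arctan_strictMono.lt_iff_lt.1 h5), h3, h4⟩

lemma quadAnn_val {a b : ℝ} (ha : 0 < a) (hab : a < b) :
    ∫ y in quadAnn a b, ff y = (Real.log b - Real.log a) * (1 / 2) := by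
  rw [quadAnn_eq ha.le, sector_val ha hab Real.pi_div_two_pos le_rfl, Real.sin_pi_div_two]
  norm_num

lemma sect_val {a b T : ℝ} (ha : 0 < a) (hab : a < b) (hT : 0 < T) :
    ∫ y in sect a b T, ff y = (Real.log b - Real.log a) * ((T ^ 2 / (1 + T ^ 2)) / 2) := by
  have harc : 0 < Real.arctan T := by
    rw [← Real.arctan_zero]; exact Real.arctan_strictMono hT
  rw [sect_eq ha.le hT, sector_val ha hab harc (Real.arctan_lt_pi_div_two T).le]
  rw [Real.sin_arctan, div_pow, Real.sq_sqrt (by positivity)]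

lemma quadAnn_subset {a b : ℝ} : quadAnn a b ⊆ Ioo 0 b ×ˢ Ioo 0 b := by
  rintro y ⟨h1, h2, _, h4⟩
  have e1 : y.1 < b := by
    have h := Real.sqrt_le_sqrt (show y.1 ^ 2 ≤ y.1 ^ 2 + y.2 ^ 2 by nlinarith)
    rw [Real.sqrt_sq h1.le] at h
    exact lt_of_le_of_lt h h4
  have e2 : y.2 < b := by
    have h := Real.sqrt_le_sqrt (show y.2 ^ 2 ≤ y.1 ^ 2 + y.2 ^ 2 by nlinarith)
    rw [Real.sqrt_sq h2.le] at h
    exact lt_of_le_of_lt h h4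
  exact ⟨⟨h1, e1⟩, ⟨h2, e2⟩⟩

lemma measurableSet_quadAnn {a b : ℝ} : MeasurableSet (quadAnn a b) := by
  have hc : Continuous fun y : ℝ × ℝ => Real.sqrt (y.1 ^ 2 + y.2 ^ 2) :=
    ((continuous_fst.pow 2).add (continuous_snd.pow 2)).sqrt
  exact ((isOpen_lt continuous_const continuous_fst).inter
    ((isOpen_lt continuous_const continuous_snd).inter
    ((isOpen_lt continuous_const hc).inter (isOpen_lt hc continuous_const)))).measurableSet

lemma integrableOn_quadAnn {a b : ℝ} (ha : 0 < a) : IntegrableOn ff (quadAnn a b) := by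
  refine Measure.integrableOn_of_bounded (M := 1 / (2 * a ^ 2)) ?fin ?mble ?bdd
  case fin =>
    apply ne_of_lt
    apply lt_of_le_of_lt (measure_mono quadAnn_subset)
    rw [Measure.volume_eq_prod, Measure.prod_prod, Real.volume_Ioo]
    exact ENNReal.mul_lt_top ENNReal.ofReal_lt_top ENNReal.ofReal_lt_top
  case mble =>
    exact ((measurable_fst.mul measurable_snd).div
      (((measurable_fst.pow_const 2).add (measurable_snd.pow_const 2)).pow_const
        2)).aestronglyMeasurable
  case bdd =>
    rw [ae_restrict_iff' measurableSet_quadAnn]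
    apply Eventually.of_forall
    rintro y ⟨h1, h2, h3, _⟩
    have hSnn : (0:ℝ) ≤ y.1 ^ 2 + y.2 ^ 2 := by positivity
    have hS : a ^ 2 < y.1 ^ 2 + y.2 ^ 2 := by
      have := Real.sq_sqrt hSnn
      nlinarith [Real.sqrt_nonneg (y.1 ^ 2 + y.2 ^ 2)]
    have key : (2 * y.1 * y.2) * a ^ 2 ≤
        (y.1 ^ 2 + y.2 ^ 2) * (y.1 ^ 2 + y.2 ^ 2) :=
      mul_le_mul (by nlinarith [sq_nonneg (y.1 - y.2)]) hS.le (by positivity) hSnn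
    rw [Real.norm_eq_abs, abs_of_nonneg (by simp only [ff]; positivity)]
    simp only [ff]
    rw [div_le_div_iff₀ (by positivity) (by positivity)]
    nlinarith [key]

end Aux14

namespace Aux14

def UBfun (x : ℝ) : ℝ := 4 / (π * x) * ((x - Real.sqrt x - 1) / 2)

def LBfun (x : ℝ) : ℝ :=
  4 / (π * x) * (((x - 2 * Real.sqrt x - Real.log (Real.sqrt 2)) *
    (Real.exp (Real.sqrt (Real.sqrt x)) ^ 2 / (1 + Real.exp (Real.sqrt (Real.sqrt x)) ^ 2))) / 2)

lemma four_div_eq (x u : ℝ) : 4 / (π * x) * (u / 2) = 2 / π * (u / x) := by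
  by_cases hx : x = 0
  · simp [hx]
  · field_simp
    ring

lemma tendsto_inv_sqrt : Tendsto (fun x : ℝ => 1 / Real.sqrt x) atTop (𝓝 0) := by
  simp only [one_div]
  exact tendsto_inv_atTop_zero.comp tendsto_sqrt_atTop

lemma tendsto_inv_id : Tendsto (fun x : ℝ => 1 / x) atTop (𝓝 0) := by
  simp only [one_div]
  exact tendsto_inv_atTop_zero

lemma UBfun_tendsto : Tendsto UBfun atTop (𝓝 (2 / π)) := by
  have h1 : Tendsto (fun x : ℝ => (x - Real.sqrt x - 1) / x) atTop (𝓝 1) := by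
    have heq : ∀ᶠ x : ℝ in atTop, 1 - 1 / Real.sqrt x - 1 / x = (x - Real.sqrt x - 1) / x := by
      filter_upwards [eventually_gt_atTop (0:ℝ)] with x hx
      rw [sub_div, sub_div, div_self hx.ne', Real.sqrt_div_self']
    have := ((tendsto_const_nhds (x := (1:ℝ))).sub tendsto_inv_sqrt).sub tendsto_inv_id
    rw [show (1:ℝ) - 0 - 0 = 1 by norm_num] at this
    exact this.congr' heq
  have : Tendsto (fun x : ℝ => 2 / π * ((x - Real.sqrt x - 1) / x)) atTop (𝓝 (2 / π * 1)) :=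
    h1.const_mul _
  rw [mul_one] at this
  exact this.congr fun x => (four_div_eq x _).symm

lemma tendsto_ratio : Tendsto (fun u : ℝ => u ^ 2 / (1 + u ^ 2)) atTop (𝓝 1) := by
  have heq : ∀ u : ℝ, 1 - 1 / (1 + u ^ 2) = u ^ 2 / (1 + u ^ 2) := by
    intro u
    have : (1:ℝ) + u ^ 2 ≠ 0 := by positivity
    field_simp
    ring
  have h2 : Tendsto (fun u : ℝ => 1 / (1 + u ^ 2)) atTop (𝓝 0) := by
    simp only [one_div]
    exact tendsto_inv_atTop_zero.comp (tendsto_atTop_add_const_left _ 1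
      (tendsto_pow_atTop two_ne_zero))
  have := (tendsto_const_nhds (x := (1:ℝ))).sub h2
  rw [sub_zero] at this
  exact this.congr heq

lemma LBfun_tendsto : Tendsto LBfun atTop (𝓝 (2 / π)) := by
  have h1 : Tendsto (fun x : ℝ => (x - 2 * Real.sqrt x - Real.log (Real.sqrt 2)) / x)
      atTop (𝓝 1) := by
    have heq : ∀ᶠ x : ℝ in atTop,
        1 - 2 * (1 / Real.sqrt x) - Real.log (Real.sqrt 2) * (1 / x)
          = (x - 2 * Real.sqrt x - Real.log (Real.sqrt 2)) / x := by
      filter_upwards [eventually_gt_atTop (0:ℝ)] with x hx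
      rw [sub_div, sub_div, div_self hx.ne']
      rw [show 2 * Real.sqrt x / x = 2 * (Real.sqrt x / x) by ring, Real.sqrt_div_self']
      ring
    have := ((tendsto_const_nhds (x := (1:ℝ))).sub (tendsto_inv_sqrt.const_mul 2)).sub
      (tendsto_inv_id.const_mul (Real.log (Real.sqrt 2)))
    rw [show (1:ℝ) - 2 * 0 - Real.log (Real.sqrt 2) * 0 = 1 by norm_num] at this
    exact this.congr' heq
  have hu : Tendsto (fun x : ℝ => Real.exp (Real.sqrt (Real.sqrt x))) atTop atTop :=
    Real.tendsto_exp_atTop.comp (tendsto_sqrt_atTop.comp tendsto_sqrt_atTop)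
  have h2 : Tendsto (fun x : ℝ =>
      Real.exp (Real.sqrt (Real.sqrt x)) ^ 2 / (1 + Real.exp (Real.sqrt (Real.sqrt x)) ^ 2))
      atTop (𝓝 1) := tendsto_ratio.comp hu
  have h3 : Tendsto (fun x : ℝ => 2 / π *
      ((x - 2 * Real.sqrt x - Real.log (Real.sqrt 2)) / x *
        (Real.exp (Real.sqrt (Real.sqrt x)) ^ 2 /
          (1 + Real.exp (Real.sqrt (Real.sqrt x)) ^ 2))))
      atTop (𝓝 (2 / π * (1 * 1))) := (h1.mul h2).const_mul _
  rw [show (2:ℝ) / π * (1 * 1) = 2 / π by ring] at h3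
  apply h3.congr
  intro x
  rw [LBfun, four_div_eq, mul_div_right_comm]

end Aux14

/-- `g(s) := s e^{|ln s|^{1/2}}`. -/
def gfun (s : ℝ) : ℝ := s * Real.exp (Real.sqrt |Real.log s|)

/-- `Q(r) := (0,∞)² \ closure(B_r(0))` (Euclidean ball). -/
def Qset (r : ℝ) : Set (ℝ × ℝ) :=
  (Ioi (0 : ℝ) ×ˢ Ioi (0 : ℝ)) \ {y : ℝ × ℝ | Real.sqrt (y.1 ^ 2 + y.2 ^ 2) ≤ r}

/-- The open Euclidean ball `B_r(0) ⊆ ℝ²`. -/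
def ball2 (r : ℝ) : Set (ℝ × ℝ) :=
  {y : ℝ × ℝ | Real.sqrt (y.1 ^ 2 + y.2 ^ 2) < r}

/-- `Ω₀ := { x ∈ (0,∞)² : 0 < x₁ < e⁻¹ and x₂ < g(x₁) }`. -/
def Ωzero : Set (ℝ × ℝ) :=
  {x : ℝ × ℝ | 0 < x.1 ∧ x.1 < Real.exp (-1) ∧ 0 < x.2 ∧ x.2 < gfun x.1}

/-- `D_s := Ω₀ ∩ Q(√(s² + g(s)²)) ∩ B_{e⁻¹}(0)`. -/
def Dset (s : ℝ) : Set (ℝ × ℝ) :=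
  Ωzero ∩ Qset (Real.sqrt (s ^ 2 + gfun s ^ 2)) ∩ ball2 (Real.exp (-1))

namespace Aux14

lemma measurable_gfun : Measurable gfun :=
  measurable_id.mul (Real.measurable_exp.comp
    (Real.continuous_sqrt.measurable.comp Real.measurable_log.abs))

lemma measurableSet_Dset (s : ℝ) : MeasurableSet (Dset s) := by
  have hc : Measurable fun y : ℝ × ℝ => Real.sqrt (y.1 ^ 2 + y.2 ^ 2) :=
    (((continuous_fst.pow 2).add (continuous_snd.pow 2)).sqrt).measurable
  have hΩ : MeasurableSet Ωzero :=
    (measurableSet_lt measurable_const measurable_fst).inter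
      ((measurableSet_lt measurable_fst measurable_const).inter
      ((measurableSet_lt measurable_const measurable_snd).inter
      (measurableSet_lt measurable_snd (measurable_gfun.comp measurable_fst))))
  have hQ : MeasurableSet (Qset (Real.sqrt (s ^ 2 + gfun s ^ 2))) :=
    (measurableSet_Ioi.prod measurableSet_Ioi).diff
      (measurableSet_le hc measurable_const)
  have hB : MeasurableSet (ball2 (Real.exp (-1))) := measurableSet_lt hc measurable_const
  exact (hΩ.inter hQ).inter hB

lemma key {s : ℝ} (hs0 : 0 < s) (hse : s < Real.exp (-16)) :
    LBfun (-Real.log s) ≤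
        (4 / (π * |Real.log s|)) * ∫ y in Dset s, y.1 * y.2 / (y.1 ^ 2 + y.2 ^ 2) ^ 2 ∧
      (4 / (π * |Real.log s|)) * ∫ y in Dset s, y.1 * y.2 / (y.1 ^ 2 + y.2 ^ 2) ^ 2 ≤
        UBfun (-Real.log s) := by
  have hπ := Real.pi_pos
  set ℓ : ℝ := -Real.log s with hℓdef
  have hlogs : Real.log s < -16 := by
    have := Real.log_lt_log hs0 hse
    rwa [Real.log_exp] at this
  have hℓ : 16 < ℓ := by simp only [hℓdef]; linarith
  have hℓ0 : 0 < ℓ := by linarith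
  have habs : |Real.log s| = ℓ := abs_of_neg (by linarith)
  have hsql : 4 < Real.sqrt ℓ := by
    have : Real.sqrt 16 < Real.sqrt ℓ := Real.sqrt_lt_sqrt (by norm_num) hℓ
    rwa [show (16:ℝ) = 4 ^ 2 by norm_num, Real.sqrt_sq (by norm_num)] at this
  have hmul : Real.sqrt ℓ * Real.sqrt ℓ = ℓ := Real.mul_self_sqrt hℓ0.le
  have hsub : Real.sqrt ℓ < ℓ / 4 := by nlinarith
  have hg0 : 0 < gfun s := mul_pos hs0 (Real.exp_pos _)
  have hsg : s ≤ gfun s := by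
    have := Real.one_le_exp (Real.sqrt_nonneg |Real.log s|)
    calc s = s * 1 := (mul_one s).symm
      _ ≤ gfun s := by unfold gfun; nlinarith
  have habs' : |Real.log s| = -Real.log s := abs_of_neg (by linarith)
  have hlg : Real.log (gfun s) = -ℓ + Real.sqrt ℓ := by
    rw [gfun, Real.log_mul hs0.ne' (Real.exp_pos _).ne', Real.log_exp, habs', hℓdef]
    ring
  set A : ℝ := Real.sqrt (s ^ 2 + gfun s ^ 2) with hAdef
  have hA1 : gfun s ≤ A :=
    (Real.le_sqrt hg0.le (by positivity)).2 (by nlinarith)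
  have hA2 : A ≤ Real.sqrt 2 * gfun s := by
    have h2g : Real.sqrt (2 * gfun s ^ 2) = Real.sqrt 2 * gfun s := by
      rw [Real.sqrt_mul (by norm_num), Real.sqrt_sq hg0.le]
    have h := Real.sqrt_le_sqrt (show s ^ 2 + gfun s ^ 2 ≤ 2 * gfun s ^ 2 by nlinarith)
    rwa [h2g] at h
  have hA0 : 0 < A := lt_of_lt_of_le hg0 hA1
  have hsqrt2 : (1:ℝ) < Real.sqrt 2 ∧ Real.sqrt 2 < 2 := by
    constructor
    · have : Real.sqrt 1 < Real.sqrt 2 := Real.sqrt_lt_sqrt (by norm_num) (by norm_num)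
      simpa using this
    · have : Real.sqrt 2 < Real.sqrt 4 := Real.sqrt_lt_sqrt (by norm_num) (by norm_num)
      rwa [show (4:ℝ) = 2 ^ 2 by norm_num, Real.sqrt_sq (by norm_num)] at this
  have hlog2 : Real.log (Real.sqrt 2) < 1 := by
    have := Real.log_lt_sub_one_of_pos (by positivity : (0:ℝ) < Real.sqrt 2) hsqrt2.1.ne'
    linarith [hsqrt2.2]
  have hlog2' : 0 < Real.log (Real.sqrt 2) := Real.log_pos hsqrt2.1
  have hlA_low : -ℓ + Real.sqrt ℓ ≤ Real.log A := by
    rw [← hlg]; exact (Real.log_le_log_iff hg0 hA0).2 hA1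
  have hla2 : Real.log (Real.sqrt 2 * gfun s)
      = Real.log (Real.sqrt 2) + (-ℓ + Real.sqrt ℓ) := by
    rw [Real.log_mul (by positivity) hg0.ne', hlg]
  have hlA_up : Real.log A ≤ Real.log (Real.sqrt 2) + (-ℓ + Real.sqrt ℓ) := by
    rw [← hla2]; exact (Real.log_le_log_iff hA0 (by positivity)).2 hA2
  have hAe : A < Real.exp (-1) := by
    rw [← Real.exp_log hA0]
    exact Real.exp_lt_exp.2 (by nlinarith)
  set b₂ : ℝ := Real.exp (-Real.sqrt ℓ) with hb₂def
  set a₂ : ℝ := Real.sqrt 2 * gfun s with ha₂def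
  have ha₂0 : 0 < a₂ := by positivity
  have hab₂ : a₂ < b₂ := by
    rw [← Real.exp_log ha₂0, hb₂def]
    exact Real.exp_lt_exp.2 (by rw [ha₂def, hla2]; nlinarith)
  have hb₂e : b₂ ≤ Real.exp (-1) := Real.exp_le_exp.2 (by nlinarith)
  set T : ℝ := Real.exp (Real.sqrt (Real.sqrt ℓ)) with hTdef
  have hT0 : 0 < T := Real.exp_pos _
  -- subset relations
  have hDsub : Dset s ⊆ quadAnn A (Real.exp (-1)) := by
    rintro y ⟨⟨hΩ, hQ⟩, hB⟩
    obtain ⟨hy1, _, hy2, _⟩ := hΩ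
    exact ⟨hy1, hy2, not_le.1 hQ.2, hB⟩
  have hLsub : sect a₂ b₂ T ⊆ Dset s := by
    rintro y ⟨h1, h2, h3, h4, h5⟩
    have hyS : y.1 < Real.sqrt (y.1 ^ 2 + y.2 ^ 2) := by
      have : Real.sqrt (y.1 ^ 2) < Real.sqrt (y.1 ^ 2 + y.2 ^ 2) :=
        Real.sqrt_lt_sqrt (sq_nonneg _) (by nlinarith)
      rwa [Real.sqrt_sq h1.le] at this
    have hy1b : y.1 < b₂ := hyS.trans h5
    have hy1e : y.1 < Real.exp (-1) := hy1b.trans_le hb₂e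
    have hlogy : Real.log y.1 < -Real.sqrt ℓ := by
      have := Real.log_lt_log h1 hy1b
      rwa [hb₂def, Real.log_exp] at this
    have hyg : y.2 < gfun y.1 := by
      have habsy : |Real.log y.1| = -Real.log y.1 :=
        abs_of_neg (by nlinarith [Real.sqrt_nonneg ℓ, hsql])
      have hTy : T < Real.exp (Real.sqrt |Real.log y.1|) := by
        rw [hTdef, habsy]
        apply Real.exp_lt_exp.2
        apply Real.sqrt_lt_sqrt (Real.sqrt_nonneg ℓ)
        linarith
      calc y.2 < T * y.1 := h3
        _ < Real.exp (Real.sqrt |Real.log y.1|) * y.1 := by nlinarith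
        _ = gfun y.1 := by rw [gfun]; ring
    refine ⟨⟨⟨h1, hy1e, h2, hyg⟩, ⟨⟨h1, h2⟩, ?_⟩⟩, ?_⟩
    · simp only [mem_setOf_eq, not_le]
      calc A ≤ a₂ := hA2
        _ < Real.sqrt (y.1 ^ 2 + y.2 ^ 2) := h4
    · exact lt_of_lt_of_le h5 hb₂e
  -- integrability and nonnegativity
  have hInt : IntegrableOn ff (quadAnn A (Real.exp (-1))) := integrableOn_quadAnn hA0
  have hIntD : IntegrableOn ff (Dset s) := hInt.mono_set hDsub
  have hnn : ∀ᵐ y ∂volume.restrict (quadAnn A (Real.exp (-1))), 0 ≤ ff y := by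
    rw [ae_restrict_iff' measurableSet_quadAnn]
    apply Eventually.of_forall
    rintro y ⟨h1, h2, _, _⟩
    simp only [ff]
    positivity
  have hnnD : ∀ᵐ y ∂volume.restrict (Dset s), 0 ≤ ff y := by
    rw [ae_restrict_iff' (measurableSet_Dset s)]
    apply Eventually.of_forall
    rintro y ⟨⟨⟨h1, _, h2, _⟩, _⟩, _⟩
    simp only [ff]
    positivity
  have hIub : (∫ y in Dset s, ff y) ≤ ∫ y in quadAnn A (Real.exp (-1)), ff y :=
    setIntegral_mono_set hInt hnn (HasSubset.Subset.eventuallyLE hDsub)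
  have hIlb : (∫ y in sect a₂ b₂ T, ff y) ≤ ∫ y in Dset s, ff y :=
    setIntegral_mono_set hIntD hnnD (HasSubset.Subset.eventuallyLE hLsub)
  rw [quadAnn_val hA0 hAe] at hIub
  rw [sect_val ha₂0 hab₂ hT0] at hIlb
  have hIeq : (∫ y in Dset s, y.1 * y.2 / (y.1 ^ 2 + y.2 ^ 2) ^ 2) = ∫ y in Dset s, ff y := rfl
  have hc₀ : 0 < 4 / (π * ℓ) := by positivity
  rw [habs, hIeq]
  constructor
  · -- lower bound
    rw [LBfun]
    have hval : Real.log b₂ - Real.log a₂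
        = (ℓ - 2 * Real.sqrt ℓ - Real.log (Real.sqrt 2)) := by
      rw [hb₂def, Real.log_exp, ha₂def, hla2]; ring
    rw [hval] at hIlb
    have := mul_le_mul_of_nonneg_left hIlb hc₀.le
    calc 4 / (π * ℓ) * ((ℓ - 2 * Real.sqrt ℓ - Real.log (Real.sqrt 2)) *
          (Real.exp (Real.sqrt (Real.sqrt ℓ)) ^ 2 /
            (1 + Real.exp (Real.sqrt (Real.sqrt ℓ)) ^ 2)) / 2)
        = 4 / (π * ℓ) * ((ℓ - 2 * Real.sqrt ℓ - Real.log (Real.sqrt 2)) *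
            (T ^ 2 / (1 + T ^ 2) / 2)) := by rw [hTdef]; ring
      _ ≤ 4 / (π * ℓ) * ∫ y in Dset s, ff y := this
  · -- upper bound
    rw [UBfun]
    have h1 : Real.log (Real.exp (-1)) - Real.log A ≤ ℓ - Real.sqrt ℓ - 1 := by
      rw [Real.log_exp]; linarith
    have h2 : (∫ y in Dset s, ff y) ≤ (ℓ - Real.sqrt ℓ - 1) * (1 / 2) := by
      apply hIub.trans
      apply mul_le_mul_of_nonneg_right h1 (by norm_num)
    calc 4 / (π * ℓ) * ∫ y in Dset s, ff y
        ≤ 4 / (π * ℓ) * ((ℓ - Real.sqrt ℓ - 1) * (1 / 2)) :=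
          mul_le_mul_of_nonneg_left h2 hc₀.le
      _ = 4 / (π * ℓ) * ((ℓ - Real.sqrt ℓ - 1) / 2) := by ring

end Aux14

theorem statement14 :
    Tendsto
      (fun s : ℝ =>
        (4 / (π * |Real.log s|)) * ∫ y in Dset s, y.1 * y.2 / (y.1 ^ 2 + y.2 ^ 2) ^ 2)
      (nhdsWithin 0 (Ioi (0 : ℝ))) (nhds (2 / π)) := by
  have hneg : Tendsto (fun s : ℝ => -Real.log s) (𝓝[>] 0) atTop :=
    tendsto_neg_atBot_atTop.comp Real.tendsto_log_nhdsGT_zero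
  have hLB : Tendsto (fun s : ℝ => Aux14.LBfun (-Real.log s)) (𝓝[>] 0) (𝓝 (2 / π)) :=
    Aux14.LBfun_tendsto.comp hneg
  have hUB : Tendsto (fun s : ℝ => Aux14.UBfun (-Real.log s)) (𝓝[>] 0) (𝓝 (2 / π)) :=
    Aux14.UBfun_tendsto.comp hneg
  have hmem : Ioo (0:ℝ) (Real.exp (-16)) ∈ 𝓝[>] (0:ℝ) :=
    Ioo_mem_nhdsGT_of_mem ⟨le_rfl, Real.exp_pos _⟩
  apply tendsto_of_tendsto_of_tendsto_of_le_of_le' hLB hUB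
  · filter_upwards [hmem] with s hs
    exact (Aux14.key hs.1 hs.2).1
  · filter_upwards [hmem] with s hs
    exact (Aux14.key hs.1 hs.2).2
end
end

section
/- Let s₀ ∈ (0, e^{−1}], c₁ ≥ 0, c₂ ≥ 0, and let h : (0, s₀] → ℝ be continuous with lim_{s→0⁺} h(s) = 2/π. Then there exists ε* ∈ (0, s₀] such that for every ε₀ ∈ (0, ε*] there is a decreasing continuously differentiable function ε : [0,∞) → (0, s₀] with ε(0) = ε₀ satisfying, for all t ≥ 0, ε'(t) > −( h(ε(t)) |ln ε(t)| − c₁ |ln ε(t)|^{1/2} − c₂ ) ε(t), and lim_{t→∞} ln( −ln ε(t) ) / t = 2/π. -/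
open Real Filter Set

noncomputable section

namespace Statement19Aux

/-- running infimum over the right tail -/
def rinf (F : ℝ → ℝ) (x : ℝ) : ℝ := ⨅ ξ : Set.Ici x, F ξ

variable {F : ℝ → ℝ} {b : ℝ}

lemma rinf_bdd (hb : ∀ x, b ≤ F x) (x : ℝ) :
    BddBelow (Set.range fun ξ : Set.Ici x => F ξ) := by
  refine ⟨b, ?_⟩
  rintro y ⟨ξ, rfl⟩
  exact hb ξ

lemma rinf_le (hb : ∀ x, b ≤ F x) {x ξ : ℝ} (hξ : x ≤ ξ) : rinf F x ≤ F ξ :=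
  ciInf_le (rinf_bdd hb x) ⟨ξ, hξ⟩

lemma le_rinf {a x : ℝ} (ha : ∀ ξ, x ≤ ξ → a ≤ F ξ) : a ≤ rinf F x :=
  le_ciInf fun ξ => ha ξ ξ.2

lemma rinf_mono (hb : ∀ x, b ≤ F x) : Monotone (rinf F) := fun x y hxy =>
  le_rinf fun ξ hξ => rinf_le hb (hxy.trans hξ)

lemma rinf_continuousOn (x₀ : ℝ) (hF : ContinuousOn F (Set.Ici x₀)) (hb : ∀ x, b ≤ F x) :
    ContinuousOn (rinf F) (Set.Ici x₀) := by
  intro x hx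
  rw [Metric.continuousWithinAt_iff]
  intro e he
  obtain ⟨⟨ξ, hξ⟩, hFξ⟩ := exists_lt_of_ciInf_lt (show rinf F x < rinf F x + e / 2 by linarith)
  simp only [Set.mem_Ici] at hξ
  have hξ₀ : ξ ∈ Set.Ici x₀ := le_trans hx hξ
  have h1 := hF ξ hξ₀
  rw [Metric.continuousWithinAt_iff] at h1
  obtain ⟨δ₁, hδ₁, H1⟩ := h1 (rinf F x + e - F ξ) (by simp at hFξ; linarith)
  have h2 := hF x hx
  rw [Metric.continuousWithinAt_iff] at h2
  obtain ⟨δ₂, hδ₂, H2⟩ := h2 (e / 2) (by linarith)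
  have hFξ' : F ξ < rinf F x + e / 2 := by simpa using hFξ
  refine ⟨min δ₂ (ξ + δ₁ - x), lt_min hδ₂ (by linarith), ?_⟩
  intro y hy hyd
  rw [Real.dist_eq] at hyd
  have hyd2 : |y - x| < δ₂ := lt_of_lt_of_le hyd (min_le_left _ _)
  have hyd2' := abs_lt.mp hyd2
  have hyd1 : y < ξ + δ₁ := by
    have := abs_lt.mp (lt_of_lt_of_le hyd (min_le_right _ _))
    linarith [this.2]
  have hFx : rinf F x ≤ F x := rinf_le hb (le_refl x)
  rcases le_or_gt x y with hxy | hxy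
  · have hmono : rinf F x ≤ rinf F y := rinf_mono hb hxy
    have hup : rinf F y ≤ F (max y ξ) := rinf_le hb (le_max_left _ _)
    have hFm : F (max y ξ) < rinf F x + e := by
      rcases le_or_gt y ξ with hc | hc
      · rw [max_eq_right hc]; linarith
      · rw [max_eq_left hc.le]
        have hd : dist y ξ < δ₁ := by
          rw [Real.dist_eq]
          exact abs_lt.mpr ⟨by linarith, by linarith⟩
        have := H1 hy hd
        rw [Real.dist_eq] at this
        have := (abs_lt.mp this).2
        linarith
    rw [Real.dist_eq, abs_lt]
    constructor <;> linarith
  · have hmono : rinf F y ≤ rinf F x := rinf_mono hb hxy.le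
    have hlow : rinf F x - e / 2 ≤ rinf F y := by
      apply le_rinf
      intro ζ hζ
      rcases le_or_gt x ζ with hc | hc
      · linarith [rinf_le hb hc]
      · have hζ₀ : ζ ∈ Set.Ici x₀ := le_trans hy hζ
        have hd : dist ζ x < δ₂ := by
          rw [Real.dist_eq]
          exact abs_lt.mpr ⟨by linarith, by linarith⟩
        have := H2 hζ₀ hd
        rw [Real.dist_eq] at this
        have := (abs_lt.mp this).1
        linarith
    rw [Real.dist_eq, abs_lt]
    constructor <;> linarith

lemma rinf_tendsto {a : ℝ} (hb : ∀ x, b ≤ F x) (hFa : Tendsto F atTop (nhds a)) :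
    Tendsto (rinf F) atTop (nhds a) := by
  rw [Metric.tendsto_atTop] at hFa ⊢
  intro e he
  obtain ⟨X, hX⟩ := hFa (e / 2) (by linarith)
  refine ⟨X, fun x hx => ?_⟩
  have h1 : a - e / 2 ≤ rinf F x := by
    apply le_rinf
    intro ξ hξ
    have := hX ξ (le_trans hx hξ)
    rw [Real.dist_eq] at this
    have := (abs_lt.mp this).1
    linarith
  have h2 : rinf F x ≤ F x := rinf_le hb (le_refl x)
  have h3 := hX x hx
  rw [Real.dist_eq] at h3
  have h3' := abs_lt.mp h3
  rw [Real.dist_eq, abs_lt]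
  constructor <;> linarith [h3'.2]

lemma cesaro {g : ℝ → ℝ} (hg : Continuous g) {a : ℝ} (ha : Tendsto g atTop (nhds a)) :
    Tendsto (fun t => (∫ s in (0:ℝ)..t, g s) / t) atTop (nhds a) := by
  rw [Metric.tendsto_atTop] at ha ⊢
  intro e he
  obtain ⟨T₀, hT₀⟩ := ha (e / 4) (by linarith)
  set T : ℝ := max T₀ 0 with hTdef
  have hTnn : (0:ℝ) ≤ T := le_max_right _ _
  have hT : ∀ s, T ≤ s → |g s - a| ≤ e / 4 := by
    intro s hs
    have := hT₀ s (le_trans (le_max_left _ _) hs)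
    rw [Real.dist_eq] at this
    linarith
  set C : ℝ := |∫ s in (0:ℝ)..T, (g s - a)| with hC
  have hC0 : 0 ≤ C := abs_nonneg _
  refine ⟨max (max T 1) (4 * C / e + 1), fun t ht => ?_⟩
  have h1 : T ≤ t := le_trans (le_trans (le_max_left _ _) (le_max_left _ _)) ht
  have h2 : (1:ℝ) ≤ t := le_trans (le_trans (le_max_right _ _) (le_max_left _ _)) ht
  have h3 : 4 * C / e + 1 ≤ t := le_trans (le_max_right _ _) ht
  have ht0 : (0:ℝ) < t := by linarith
  have hint1 : IntervalIntegrable (fun s => g s - a) MeasureTheory.volume 0 T :=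
    (hg.sub continuous_const).intervalIntegrable _ _
  have hint2 : IntervalIntegrable (fun s => g s - a) MeasureTheory.volume T t :=
    (hg.sub continuous_const).intervalIntegrable _ _
  have hsplit : (∫ s in (0:ℝ)..t, (g s - a)) =
      (∫ s in (0:ℝ)..T, (g s - a)) + ∫ s in T..t, (g s - a) :=
    (intervalIntegral.integral_add_adjacent_intervals hint1 hint2).symm
  have hbound : |∫ s in T..t, (g s - a)| ≤ e / 4 * |t - T| := by
    have := intervalIntegral.norm_integral_le_of_norm_le_const
      (a := T) (b := t) (C := e / 4) (f := fun s => g s - a) ?_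
    · simpa [Real.norm_eq_abs] using this
    · intro x hx
      rw [Set.uIoc_of_le h1] at hx
      simpa [Real.norm_eq_abs] using hT x hx.1.le
  have hsub : (∫ s in (0:ℝ)..t, (g s - a)) = (∫ s in (0:ℝ)..t, g s) - a * t := by
    rw [intervalIntegral.integral_sub (hg.intervalIntegrable _ _) intervalIntegrable_const]
    simp [intervalIntegral.integral_const]
    ring
  rw [Real.dist_eq]
  have heq : (∫ s in (0:ℝ)..t, g s) / t - a = (∫ s in (0:ℝ)..t, (g s - a)) / t := by
    rw [hsub]
    field_simp
  rw [heq, hsplit, abs_div, abs_of_pos ht0]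
  have habs : |(∫ s in (0:ℝ)..T, (g s - a)) + ∫ s in T..t, (g s - a)| ≤ C + e / 4 * (t - T) := by
    calc |(∫ s in (0:ℝ)..T, (g s - a)) + ∫ s in T..t, (g s - a)|
        ≤ C + |∫ s in T..t, (g s - a)| := by rw [hC]; exact abs_add_le _ _
      _ ≤ C + e / 4 * (t - T) := by
          rw [abs_of_nonneg (by linarith : (0:ℝ) ≤ t - T)] at hbound
          linarith
  have hfinal : (C + e / 4 * (t - T)) / t < e := by
    rw [div_lt_iff₀ ht0]
    have hC4 : 4 * C ≤ (t - 1) * e := by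
      have : 4 * C / e ≤ t - 1 := by linarith
      calc 4 * C = 4 * C / e * e := by field_simp
        _ ≤ (t - 1) * e := by
            apply mul_le_mul_of_nonneg_right this (le_of_lt he)
    nlinarith
  calc |(∫ s in (0:ℝ)..T, (g s - a)) + ∫ s in T..t, (g s - a)| / t
      ≤ (C + e / 4 * (t - T)) / t := by gcongr
    _ < e := hfinal

end Statement19Aux
set_option maxHeartbeats 1000000 in
theorem statement19 (s₀ : ℝ) (hs₀ : s₀ ∈ Ioc (0 : ℝ) (Real.exp (-1)))
    (c₁ c₂ : ℝ) (hc₁ : 0 ≤ c₁) (hc₂ : 0 ≤ c₂)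
    (h : ℝ → ℝ) (hcont : ContinuousOn h (Ioc (0 : ℝ) s₀))
    (hlim : Tendsto h (nhdsWithin 0 (Ioc (0 : ℝ) s₀)) (nhds (2 / π))) :
    ∃ εstar : ℝ, εstar ∈ Ioc (0 : ℝ) s₀ ∧
      ∀ ε₀ : ℝ, ε₀ ∈ Ioc (0 : ℝ) εstar →
        ∃ ε ε' : ℝ → ℝ,
          (∀ t : ℝ, 0 ≤ t → ε t ∈ Ioc (0 : ℝ) s₀) ∧
          ε 0 = ε₀ ∧
          -- ε is decreasing and continuously differentiable on [0,∞)
          AntitoneOn ε (Ici (0 : ℝ)) ∧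
          (∀ t : ℝ, 0 ≤ t → HasDerivWithinAt ε (ε' t) (Ici (0 : ℝ)) t) ∧
          ContinuousOn ε' (Ici (0 : ℝ)) ∧
          -- the differential inequality
          (∀ t : ℝ, 0 ≤ t →
            -((h (ε t) * |Real.log (ε t)| - c₁ * Real.sqrt |Real.log (ε t)| - c₂) * ε t)
              < ε' t) ∧
          -- the asymptotic double-exponential decay rate
          Tendsto (fun t : ℝ => Real.log (-Real.log (ε t)) / t) atTop (nhds (2 / π)) := by
  obtain ⟨hs₀pos, hs₀le⟩ := hs₀
  have hπpos := Real.pi_pos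
  have hπ1 : (0.62 : ℝ) < 2 / π := by
    rw [lt_div_iff₀ hπpos]
    nlinarith [Real.pi_lt_d2]
  have hπ2 : 2 / π < (0.65 : ℝ) := by
    rw [div_lt_iff₀ hπpos]
    nlinarith [Real.pi_gt_d2]
  -- choose a δ-neighborhood where h is within 1/100 of 2/π
  obtain ⟨δ, hδpos, hδ⟩ := Metric.tendsto_nhdsWithin_nhds.mp hlim (1 / 100) (by norm_num)
  set K : ℝ := (200 * c₁) ^ 2 + 200 * c₂ + 1 with hKdef
  have hK1 : (1 : ℝ) ≤ K := by nlinarith [sq_nonneg (200 * c₁)]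
  clear_value K
  set s₁ : ℝ := min (min (δ / 2) s₀) (Real.exp (-K)) with hs₁def
  have hs₁pos : 0 < s₁ := lt_min (lt_min (by linarith) hs₀pos) (Real.exp_pos _)
  have hs₁s₀ : s₁ ≤ s₀ := le_trans (min_le_left _ _) (min_le_right _ _)
  have hs₁δ : s₁ ≤ δ / 2 := le_trans (min_le_left _ _) (min_le_left _ _)
  have hs₁K : s₁ ≤ Real.exp (-K) := min_le_right _ _
  clear_value s₁
  -- h is close to 2/π on (0, s₁]
  have hh : ∀ s : ℝ, 0 < s → s ≤ s₁ → |h s - 2 / π| < 1 / 100 := by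
    intro s h1 h2
    have := hδ (show s ∈ Ioc (0:ℝ) s₀ from ⟨h1, h2.trans hs₁s₀⟩)
      (show dist s 0 < δ by rw [Real.dist_eq, sub_zero, abs_of_pos h1]; linarith)
    rwa [Real.dist_eq] at this
  refine ⟨s₁, ⟨hs₁pos, hs₁s₀⟩, ?_⟩
  rintro ε₀ ⟨hε₀pos, hε₀s₁⟩
  set L₀ : ℝ := -Real.log ε₀ with hL₀def
  have hL₀K : K ≤ L₀ := by
    have h1 : Real.log ε₀ ≤ Real.log (Real.exp (-K)) :=
      Real.log_le_log hε₀pos (le_trans hε₀s₁ hs₁K)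
    rw [Real.log_exp] at h1
    simp only [hL₀def]
    linarith
  have hL₀pos : 0 < L₀ := lt_of_lt_of_le (by linarith) hL₀K
  clear_value L₀
  set φ₀ : ℝ := Real.log L₀ with hφ₀def
  have hexpφ₀ : Real.exp φ₀ = L₀ := by rw [hφ₀def]; exact Real.exp_log hL₀pos
  clear_value φ₀
  -- the function M
  set M : ℝ → ℝ := fun x =>
    h (Real.exp (-Real.exp x)) - c₁ / Real.exp (x / 2) - c₂ / Real.exp x with hMdef
  clear_value M
  -- bounds for M on [φ₀, ∞)
  have hexpx : ∀ x : ℝ, φ₀ ≤ x → K ≤ Real.exp x := by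
    intro x hx
    calc K ≤ L₀ := hL₀K
      _ = Real.exp φ₀ := hexpφ₀.symm
      _ ≤ Real.exp x := Real.exp_le_exp.mpr hx
  have hsmem : ∀ x : ℝ, φ₀ ≤ x → Real.exp (-Real.exp x) ∈ Ioc (0:ℝ) s₁ := by
    intro x hx
    refine ⟨Real.exp_pos _, ?_⟩
    have h1 : Real.exp φ₀ ≤ Real.exp x := Real.exp_le_exp.mpr hx
    have h2 : -Real.exp x ≤ Real.log ε₀ := by
      rw [hexpφ₀] at h1; simp only [hL₀def] at h1; linarith
    calc Real.exp (-Real.exp x) ≤ Real.exp (Real.log ε₀) := Real.exp_le_exp.mpr h2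
      _ = ε₀ := Real.exp_log hε₀pos
      _ ≤ s₁ := hε₀s₁
  have hM' : ∀ x : ℝ, φ₀ ≤ x → 0.6 < M x ∧ M x < 0.7 := by
    intro x hx
    obtain ⟨hspos, hss₁⟩ := hsmem x hx
    have hhx := abs_lt.mp (hh _ hspos hss₁)
    have hKx := hexpx x hx
    have hexppos := Real.exp_pos x
    have hexp2pos := Real.exp_pos (x / 2)
    have hc1bound : c₁ / Real.exp (x / 2) ≤ 1 / 200 := by
      have hsq : 200 * c₁ ≤ Real.exp (x / 2) := by
        rw [Real.exp_half]
        calc 200 * c₁ = Real.sqrt ((200 * c₁) ^ 2) := (Real.sqrt_sq (by positivity)).symm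
          _ ≤ Real.sqrt (Real.exp x) := Real.sqrt_le_sqrt (by nlinarith)
      rw [div_le_iff₀ hexp2pos]
      nlinarith
    have hc2bound : c₂ / Real.exp x ≤ 1 / 200 := by
      rw [div_le_iff₀ hexppos]
      nlinarith
    have hc1nn : 0 ≤ c₁ / Real.exp (x / 2) := by positivity
    have hc2nn : 0 ≤ c₂ / Real.exp x := by positivity
    constructor
    · simp only [hMdef]; linarith [hhx.1]
    · simp only [hMdef]; linarith [hhx.2]
  -- clamped version of M
  set Mb : ℝ → ℝ := fun x => max 0.6 (min (M x) 0.7) with hMbdef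
  clear_value Mb
  have hb : ∀ x, (0.6 : ℝ) ≤ Mb x := fun x => by
    simp only [hMbdef]; exact le_max_left _ _
  have hub : ∀ x, Mb x ≤ (0.7 : ℝ) := fun x => by
    simp only [hMbdef]; exact max_le (by norm_num) (min_le_right _ _)
  have hMbleM : ∀ x : ℝ, φ₀ ≤ x → Mb x ≤ M x := by
    intro x hx
    simp only [hMbdef]
    exact max_le (hM' x hx).1.le (min_le_left _ _)
  -- continuity of Mb on [φ₀, ∞)
  have hMcont : ContinuousOn M (Ici φ₀) := by
    have hmap : ∀ x ∈ Ici φ₀, Real.exp (-Real.exp x) ∈ Ioc (0:ℝ) s₀ := by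
      intro x hx
      obtain ⟨h1, h2⟩ := hsmem x hx
      exact ⟨h1, h2.trans hs₁s₀⟩
    have hin : Continuous fun x : ℝ => Real.exp (-Real.exp x) :=
      Real.continuous_exp.comp Real.continuous_exp.neg
    have hpart1 : ContinuousOn (fun x : ℝ => h (Real.exp (-Real.exp x))) (Ici φ₀) :=
      hcont.comp hin.continuousOn hmap
    have hpart2 : Continuous fun x : ℝ => c₁ / Real.exp (x / 2) :=
      continuous_const.div (Real.continuous_exp.comp (continuous_id.div_const 2))
        fun x => (Real.exp_pos _).ne'
    have hpart3 : Continuous fun x : ℝ => c₂ / Real.exp x :=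
      continuous_const.div Real.continuous_exp fun x => (Real.exp_pos _).ne'
    rw [hMdef]
    exact (hpart1.sub hpart2.continuousOn).sub hpart3.continuousOn
  have hMbcont : ContinuousOn Mb (Ici φ₀) := by
    rw [hMbdef]
    exact fun x hx =>
      Filter.Tendsto.max tendsto_const_nhds (Filter.Tendsto.min (hMcont x hx) tendsto_const_nhds)
  -- Mb tends to 2/π at infinity
  have hcomp : Tendsto (fun ξ : ℝ => Real.exp (-Real.exp ξ)) atTop (nhdsWithin 0 (Ioc (0:ℝ) s₀)) := by
    rw [tendsto_nhdsWithin_iff]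
    constructor
    · have h1 : Tendsto (fun ξ : ℝ => -Real.exp ξ) atTop atBot :=
        tendsto_neg_atBot_iff.mpr Real.tendsto_exp_atTop
      exact Real.tendsto_exp_atBot.comp h1
    · filter_upwards [eventually_ge_atTop (-Real.log s₀)] with ξ hξ
      refine ⟨Real.exp_pos _, ?_⟩
      have h1 : -Real.log s₀ < Real.exp ξ := lt_of_le_of_lt hξ (by linarith [Real.add_one_le_exp ξ])
      calc Real.exp (-Real.exp ξ) ≤ Real.exp (Real.log s₀) := Real.exp_le_exp.mpr (by linarith)
        _ = s₀ := Real.exp_log hs₀pos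
  have hMtend : Tendsto M atTop (nhds (2 / π)) := by
    rw [hMdef]
    have h1 : Tendsto (fun x : ℝ => h (Real.exp (-Real.exp x))) atTop (nhds (2 / π)) :=
      hlim.comp hcomp
    have h2 : Tendsto (fun x : ℝ => c₁ / Real.exp (x / 2)) atTop (nhds 0) := by
      apply Tendsto.div_atTop tendsto_const_nhds
      exact Real.tendsto_exp_atTop.comp (tendsto_id.atTop_div_const (by norm_num))
    have h3 : Tendsto (fun x : ℝ => c₂ / Real.exp x) atTop (nhds 0) :=
      Tendsto.div_atTop tendsto_const_nhds Real.tendsto_exp_atTop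
    have := (h1.sub h2).sub h3
    simpa using this
  have hMbtend : Tendsto Mb atTop (nhds (2 / π)) := by
    rw [hMbdef]
    have h1 : Tendsto (fun x => min (M x) 0.7) atTop (nhds (min (2 / π) 0.7)) :=
      hMtend.min tendsto_const_nhds
    have h2 : Tendsto (fun x => max 0.6 (min (M x) 0.7)) atTop (nhds (max 0.6 (min (2 / π) 0.7))) :=
      tendsto_const_nhds.max h1
    have e1 : min (2 / π) (0.7:ℝ) = 2 / π := min_eq_left (le_of_lt (hπ2.trans (by norm_num)))
    have e2 : max (0.6:ℝ) (2 / π) = 2 / π :=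
      max_eq_right (le_of_lt ((show (0.6:ℝ) < 0.62 by norm_num).trans hπ1))
    rw [e1, e2] at h2
    exact h2
  -- the slope function g
  set R : ℝ → ℝ := Statement19Aux.rinf Mb with hRdef
  clear_value R
  have hRlb : ∀ x, (0.6:ℝ) ≤ R x := fun x => by
    rw [hRdef]; exact Statement19Aux.le_rinf fun ξ _ => hb ξ
  have hRub : ∀ x, R x ≤ (0.7:ℝ) := fun x => by
    rw [hRdef]; exact (Statement19Aux.rinf_le hb (le_refl x)).trans (hub x)
  set g : ℝ → ℝ := fun s => (1 - 1 / (6 * (1 + max s 0))) * R (φ₀ + max s 0 / 2) with hgdef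
  clear_value g
  have hmax0 : ∀ s : ℝ, (0:ℝ) ≤ max s 0 := fun s => le_max_right _ _
  have hηbounds : ∀ s : ℝ, 0 < 1 / (6 * (1 + max s 0)) ∧ 1 / (6 * (1 + max s 0)) ≤ 1 / 6 := by
    intro s
    have h0 := hmax0 s
    constructor
    · positivity
    · rw [div_le_div_iff₀ (by positivity) (by norm_num)]
      linarith
  have hglb : ∀ s : ℝ, (1/2 : ℝ) ≤ g s := by
    intro s
    obtain ⟨h1, h2⟩ := hηbounds s
    have h3 := hRlb (φ₀ + max s 0 / 2)
    have h4 := hRub (φ₀ + max s 0 / 2)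
    simp only [hgdef]
    calc (1/2 : ℝ) = (5/6) * (0.6:ℝ) := by norm_num
      _ ≤ (1 - 1 / (6 * (1 + max s 0))) * R (φ₀ + max s 0 / 2) :=
          mul_le_mul (by linarith) h3 (by norm_num) (by linarith)
  have hgub : ∀ s : ℝ, g s ≤ (0.7 : ℝ) := by
    intro s
    obtain ⟨h1, h2⟩ := hηbounds s
    have h3 := hRlb (φ₀ + max s 0 / 2)
    have h4 := hRub (φ₀ + max s 0 / 2)
    simp only [hgdef]
    calc (1 - 1 / (6 * (1 + max s 0))) * R (φ₀ + max s 0 / 2)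
        ≤ 1 * (0.7:ℝ) := mul_le_mul (by linarith) h4 (by linarith) (by norm_num)
      _ = 0.7 := one_mul _
  have hgpos : ∀ s : ℝ, 0 < g s := fun s => lt_of_lt_of_le (by norm_num) (hglb s)
  have hgcont : Continuous g := by
    rw [hgdef]
    have hpart1 : Continuous fun s : ℝ => 1 - 1 / (6 * (1 + max s 0)) := by
      apply continuous_const.sub
      exact continuous_const.div
        (continuous_const.mul (continuous_const.add (continuous_id.max continuous_const)))
        fun s => by positivity
    have hpart2 : Continuous fun s : ℝ => R (φ₀ + max s 0 / 2) := by
      rw [hRdef]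
      apply (Statement19Aux.rinf_continuousOn φ₀ hMbcont hb).comp_continuous
        (continuous_const.add ((continuous_id.max continuous_const).div_const 2))
      intro s
      simp only [Set.mem_Ici, id_eq]
      have := hmax0 s
      show φ₀ ≤ φ₀ + max s 0 / 2
      linarith
    apply hpart1.mul
    rw [hRdef] at hpart2 ⊢
    exact hpart2
  have hgtend : Tendsto g atTop (nhds (2 / π)) := by
    rw [hgdef]
    have hηt : Tendsto (fun s : ℝ => 1 / (6 * (1 + max s 0))) atTop (nhds 0) := by
      have hd : Tendsto (fun s : ℝ => 6 * (1 + max s 0)) atTop atTop := by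
        apply tendsto_atTop_mono _ tendsto_id
        intro s
        have h1 := le_max_left s 0
        have h2 := le_max_right (s:ℝ) 0
        simp only [id]
        linarith
      have := tendsto_inv_atTop_zero.comp hd
      exact this.congr fun s => by simp [Function.comp_apply, one_div]
    have hRt : Tendsto (fun s : ℝ => R (φ₀ + max s 0 / 2)) atTop (nhds (2 / π)) := by
      rw [hRdef]
      apply ((Statement19Aux.rinf_tendsto hb hMbtend).comp :)
      apply tendsto_atTop_add_const_left _ φ₀
      apply tendsto_atTop_mono (fun s => by have := le_max_left s 0; linarith :
        ∀ s : ℝ, s / 2 ≤ max s 0 / 2)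
      exact tendsto_id.atTop_div_const (by norm_num)
    have := ((tendsto_const_nhds (x := (1:ℝ))).sub hηt).mul hRt
    simpa using this
  -- the phase function φ
  set φ : ℝ → ℝ := fun t => φ₀ + ∫ s in (0:ℝ)..t, g s with hφdef
  clear_value φ
  have hφd : ∀ t : ℝ, HasDerivAt φ (g t) t := by
    intro t
    rw [hφdef]
    exact HasDerivAt.const_add φ₀ ((hgcont.integral_hasStrictDerivAt 0 t).hasDerivAt)
  have hφdiff : Differentiable ℝ φ := fun t => (hφd t).differentiableAt
  have hφlb : ∀ t : ℝ, 0 ≤ t → φ₀ + t / 2 ≤ φ t := by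
    intro t ht
    have hint : (∫ s in (0:ℝ)..t, (1/2:ℝ)) ≤ ∫ s in (0:ℝ)..t, g s :=
      intervalIntegral.integral_mono_on ht intervalIntegrable_const
        (hgcont.intervalIntegrable _ _) fun x _ => hglb x
    rw [intervalIntegral.integral_const] at hint
    simp only [hφdef, smul_eq_mul] at hint ⊢
    linarith
  have hφ0 : φ 0 = φ₀ := by simp [hφdef]
  -- the solution and its derivative
  set ε : ℝ → ℝ := fun t => Real.exp (-Real.exp (φ t)) with hεdef
  clear_value ε
  set ε' : ℝ → ℝ := fun t => Real.exp (-Real.exp (φ t)) * -(Real.exp (φ t) * g t) with hε'def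
  clear_value ε'
  have hεd : ∀ t : ℝ, HasDerivAt ε (ε' t) t := by
    intro t
    simp only [hεdef, hε'def]
    exact (((hφd t).exp).neg).exp
  have hεpos : ∀ t : ℝ, 0 < ε t := fun t => by rw [hεdef]; exact Real.exp_pos _
  have hεle : ∀ t : ℝ, 0 ≤ t → ε t ≤ ε₀ := by
    intro t ht
    have h1 : φ₀ ≤ φ t := by linarith [hφlb t ht]
    have h2 : Real.exp φ₀ ≤ Real.exp (φ t) := Real.exp_le_exp.mpr h1
    rw [hexpφ₀] at h2
    calc ε t = Real.exp (-Real.exp (φ t)) := by rw [hεdef]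
      _ ≤ Real.exp (Real.log ε₀) := Real.exp_le_exp.mpr (by simp only [hL₀def] at h2; linarith)
      _ = ε₀ := Real.exp_log hε₀pos
  refine ⟨ε, ε', ?_, ?_, ?_, ?_, ?_, ?_, ?_⟩
  · -- range
    intro t ht
    exact ⟨hεpos t, (hεle t ht).trans (hε₀s₁.trans hs₁s₀)⟩
  · -- initial value
    simp only [hεdef]
    rw [hφ0, hexpφ₀]
    simp only [hL₀def, neg_neg]
    exact Real.exp_log hε₀pos
  · -- antitone
    apply antitoneOn_of_deriv_nonpos (convex_Ici 0)
    · rw [hεdef]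
      exact hφdiff.continuous.rexp.neg.rexp.continuousOn
    · intro x _
      exact (hεd x).differentiableAt.differentiableWithinAt
    · intro x _
      rw [(hεd x).deriv]
      simp only [hε'def]
      have h1 := Real.exp_pos (-Real.exp (φ x))
      have h2 := mul_pos (Real.exp_pos (φ x)) (hgpos x)
      nlinarith
  · -- derivative
    exact fun t _ => (hεd t).hasDerivWithinAt
  · -- continuity of ε'
    rw [hε'def]
    apply Continuous.continuousOn
    have h1 : Continuous fun t : ℝ => Real.exp (-Real.exp (φ t)) :=
      (hφdiff.continuous.rexp.neg).rexp
    have h2 : Continuous fun t : ℝ => -(Real.exp (φ t) * g t) :=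
      ((hφdiff.continuous.rexp).mul hgcont).neg
    exact h1.mul h2
  · -- the differential inequality
    intro t ht
    have hψle : φ₀ + t / 2 ≤ φ t := hφlb t ht
    have hφtge : φ₀ ≤ φ t := by linarith
    have hMt := hM' (φ t) hφtge
    have hXpos : 0 < Real.exp (φ t) := Real.exp_pos _
    have hlog : Real.log (ε t) = -Real.exp (φ t) := by
      simp only [hεdef]; exact Real.log_exp _
    have habs : |Real.log (ε t)| = Real.exp (φ t) := by
      rw [hlog, abs_neg, abs_of_pos hXpos]
    have hgM : g t < M (φ t) := by
      have h1 : g t < R (φ₀ + max t 0 / 2) := by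
        have hη := (hηbounds t).1
        have hR06 := hRlb (φ₀ + max t 0 / 2)
        calc g t = (1 - 1 / (6 * (1 + max t 0))) * R (φ₀ + max t 0 / 2) := by rw [hgdef]
          _ < 1 * R (φ₀ + max t 0 / 2) := by
              apply mul_lt_mul_of_pos_right _ (by linarith)
              linarith
          _ = R (φ₀ + max t 0 / 2) := one_mul _
      have h2 : R (φ₀ + max t 0 / 2) ≤ Mb (φ t) := by
        rw [hRdef]
        apply Statement19Aux.rinf_le hb
        rw [max_eq_left ht]
        exact hψle
      have h3 : Mb (φ t) ≤ M (φ t) := hMbleM _ hφtge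
      linarith
    have hXg : Real.exp (φ t) * g t < Real.exp (φ t) * M (φ t) :=
      mul_lt_mul_of_pos_left hgM hXpos
    have hexpand : Real.exp (φ t) * M (φ t) =
        h (ε t) * Real.exp (φ t) - c₁ * Real.sqrt (Real.exp (φ t)) - c₂ := by
      have hs2 : Real.exp (φ t / 2) = Real.sqrt (Real.exp (φ t)) := Real.exp_half _
      have hX0 : Real.exp (φ t) ≠ 0 := hXpos.ne'
      simp only [hMdef, hεdef]
      rw [hs2]
      have e1 : Real.exp (φ t) * (c₁ / Real.sqrt (Real.exp (φ t))) = c₁ * Real.sqrt (Real.exp (φ t)) := by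
        rw [mul_div_assoc', mul_comm, mul_div_assoc, Real.div_sqrt]
      have e2 : Real.exp (φ t) * (c₂ / Real.exp (φ t)) = c₂ := by
        rw [mul_comm, div_mul_cancel₀ _ hX0]
      calc Real.exp (φ t) * (h (Real.exp (-Real.exp (φ t))) - c₁ / Real.sqrt (Real.exp (φ t))
              - c₂ / Real.exp (φ t))
          = h (Real.exp (-Real.exp (φ t))) * Real.exp (φ t)
            - Real.exp (φ t) * (c₁ / Real.sqrt (Real.exp (φ t)))
            - Real.exp (φ t) * (c₂ / Real.exp (φ t)) := by ring
        _ = _ := by rw [e1, e2]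
    have hfinal : Real.exp (φ t) * g t <
        h (ε t) * Real.exp (φ t) - c₁ * Real.sqrt (Real.exp (φ t)) - c₂ := by
      rw [← hexpand]; exact hXg
    have hεt := hεpos t
    have hmul := mul_lt_mul_of_pos_right hfinal hεt
    rw [habs]
    have hrw : ε' t = -(Real.exp (φ t) * g t * ε t) := by
      simp only [hε'def, hεdef]; ring
    rw [hrw]
    linarith
  · -- the limit
    have heq : (fun t : ℝ => Real.log (-Real.log (ε t)) / t) = fun t : ℝ => φ t / t := by
      funext t
      have : Real.log (ε t) = -Real.exp (φ t) := by simp only [hεdef]; exact Real.log_exp _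
      rw [this, neg_neg, Real.log_exp]
    rw [heq]
    have heq2 : (fun t : ℝ => φ t / t) =
        fun t : ℝ => φ₀ / t + (∫ s in (0:ℝ)..t, g s) / t := by
      funext t
      simp only [hφdef]
      rw [add_div]
    rw [heq2]
    have h1 : Tendsto (fun t : ℝ => φ₀ / t) atTop (nhds 0) :=
      Tendsto.div_atTop tendsto_const_nhds tendsto_id
    have h2 := Statement19Aux.cesaro hgcont hgtend
    have := h1.add h2
    simpa using this
end
end
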